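/- Let p be a prime and let T be a transitive subgroup of the symmetric group on a set of size p. Then: (a) every nontrivial nilpotent normal subgroup of T has order exactly p; and (b) T possesses a nontrivial nilpotent normal subgroup if and only if T is solvable. -/

import Mathlib

open MulAction Subgroup Pointwise
open scoped commutatorElement

theorem auxFSTPD_center_nontrivial {G : Type*} [Group G] [hG : Group.IsNilpotent G]
    [hnt : Nontrivial G] : Nontrivial (Subgroup.center G) := by
  by_contra h
  have hc : Subgroup.center G = ⊥ := by
    rcases (Subgroup.center G).bot_or_nontrivial with h' | h'
    · exact h'
    · exact absurd h' h
  have key : ∀ n, Subgroup.upperCentralSeries G n = ⊥ := by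
    intro n
    induction n with
    | zero => exact Subgroup.upperCentralSeries_zero G
    | succ n ih =>
      ext x
      simp only [Subgroup.mem_upperCentralSeries_succ_iff, ih, Subgroup.mem_bot]
      constructor
      · intro hx
        have : x ∈ Subgroup.center G := by
          rw [Subgroup.mem_center_iff]
          intro y
          have h2 : (x * y) * (y * x)⁻¹ = 1 := by
            simpa [mul_inv_rev, mul_assoc, commutatorElement_def] using hx y
          exact (mul_inv_eq_one.mp h2).symm
        rw [hc, Subgroup.mem_bot] at this
        exact this
      · rintro rfl
        intro y; group
  obtain ⟨n, hn⟩ := hG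
  rw [key n] at hn
  exact (bot_ne_top (α := Subgroup G)) (hn ▸ rfl) |>.elim

theorem auxFSTPD_transitive {p : ℕ} (hp : p.Prime) {X : Type*} [Fintype X]
    (hX : Fintype.card X = p)
    (T : Subgroup (Equiv.Perm X)) (htrans : ∀ x y : X, ∃ σ ∈ T, σ x = y)
    (S : Subgroup (Equiv.Perm X))
    (hconj : ∀ t ∈ T, ∀ s ∈ S, t * s * t⁻¹ ∈ S) (hS : S ≠ ⊥) :
    ∀ x y : X, ∃ s ∈ S, s x = y := by
  classical
  haveI : IsPretransitive T X := by
    constructor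
    intro x y
    obtain ⟨σ, hσ, h⟩ := htrans x y
    exact ⟨⟨σ, hσ⟩, h⟩
  obtain ⟨s0, hs0S, hs0⟩ : ∃ s ∈ S, s ≠ (1 : Equiv.Perm X) := by
    obtain ⟨⟨a, ha⟩, h⟩ := Subgroup.ne_bot_iff_exists_ne_one.mp hS
    exact ⟨a, ha, fun h' => h (Subtype.ext h')⟩
  obtain ⟨x0, hx0⟩ : ∃ x0 : X, s0 x0 ≠ x0 := by
    by_contra h
    push_neg at h
    exact hs0 (Equiv.ext h)
  -- the orbit of x0 under S
  set B : Set X := MulAction.orbit S x0 with hB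
  have hmemB : ∀ y : X, y ∈ B ↔ ∃ s ∈ S, s x0 = y := by
    intro y
    constructor
    · rintro ⟨⟨s, hs⟩, rfl⟩
      exact ⟨s, hs, rfl⟩
    · rintro ⟨s, hs, rfl⟩
      exact ⟨⟨s, hs⟩, rfl⟩
  have horb : ∀ (t : T) (x : X), t • (MulAction.orbit S x : Set X)
      = MulAction.orbit S ((t : Equiv.Perm X) x) := by
    intro t x
    ext y
    constructor
    · rintro ⟨-, ⟨⟨s, hs⟩, rfl⟩, rfl⟩
      refine ⟨⟨(t : Equiv.Perm X) * s * (t : Equiv.Perm X)⁻¹, hconj t t.2 s hs⟩, ?_⟩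
      simp [Equiv.Perm.smul_def, Subgroup.smul_def]
    · rintro ⟨⟨s, hs⟩, rfl⟩
      have hmem : ((t : Equiv.Perm X)⁻¹ * s * (t : Equiv.Perm X)) ∈ S := by
        have := hconj _ (T.inv_mem t.2) s hs
        simpa using this
      refine ⟨((t : Equiv.Perm X)⁻¹ * s * (t : Equiv.Perm X)) x,
        ⟨⟨_, hmem⟩, by simp [Subgroup.smul_def, Equiv.Perm.smul_def]⟩, ?_⟩
      simp [Equiv.Perm.smul_def, Subgroup.smul_def]
  have hblock : MulAction.IsBlock T B := by
    rw [MulAction.isBlock_iff_smul_eq_smul_of_nonempty]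
    intro t1 t2 hne
    rw [hB, horb, horb] at hne ⊢
    obtain ⟨y, hy1, hy2⟩ := hne
    have e1 := (MulAction.orbit_eq_iff (G := S)).mpr hy1
    have e2 := (MulAction.orbit_eq_iff (G := S)).mpr hy2
    rw [← e1, ← e2]
  have hBne : B.Nonempty := ⟨x0, MulAction.mem_orbit_self x0⟩
  have hdvd : B.ncard ∣ p := by
    have := hblock.ncard_dvd_card hBne
    rwa [Nat.card_eq_fintype_card, hX] at this
  have hBfin : B.Finite := Set.toFinite B
  have h2le : 1 < B.ncard := by
    rw [Set.one_lt_ncard_iff hBfin]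
    exact ⟨s0 x0, x0, (hmemB _).mpr ⟨s0, hs0S, rfl⟩, MulAction.mem_orbit_self x0, hx0⟩
  have hcard : B.ncard = p := ((Nat.Prime.eq_one_or_self_of_dvd hp _ hdvd).resolve_left
    (by omega))
  have hBuniv : B = Set.univ := by
    apply Set.eq_of_subset_of_ncard_le (Set.subset_univ B)
    rw [Set.ncard_univ, Nat.card_eq_fintype_card, hX, hcard]
  intro x y
  obtain ⟨s1, hs1, hs1x⟩ := (hmemB x).mp (hBuniv ▸ Set.mem_univ x)
  obtain ⟨s2, hs2, hs2x⟩ := (hmemB y).mp (hBuniv ▸ Set.mem_univ y)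
  exact ⟨s2 * s1⁻¹, S.mul_mem hs2 (S.inv_mem hs1), by
    simp [← hs1x, ← hs2x]⟩

theorem auxFSTPD_key {p : ℕ} (hp : p.Prime) {X : Type*} [Fintype X]
    (hX : Fintype.card X = p)
    (T : Subgroup (Equiv.Perm X)) (htrans : ∀ x y : X, ∃ σ ∈ T, σ x = y)
    (S : Subgroup (Equiv.Perm X))
    (hconj : ∀ t ∈ T, ∀ s ∈ S, t * s * t⁻¹ ∈ S) (hS : S ≠ ⊥)
    (hnil : Group.IsNilpotent S) :
    (∀ a ∈ S, ∀ b ∈ S, a * b = b * a) ∧ Nat.card S = p ∧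
    (∀ c : Equiv.Perm X, (∀ m ∈ S, c * m = m * c) → c ∈ S) ∧
    (∀ x y : X, ∃ s ∈ S, s x = y) := by
  classical
  haveI : Nontrivial S := (Subgroup.nontrivial_iff_ne_bot S).mpr hS
  haveI := hnil
  haveI : Nontrivial (Subgroup.center S) := auxFSTPD_center_nontrivial
  set Z : Subgroup (Equiv.Perm X) := Subgroup.map S.subtype (Subgroup.center S) with hZdef
  have hZmem : ∀ z : Equiv.Perm X, z ∈ Z ↔ z ∈ S ∧ ∀ m ∈ S, z * m = m * z := by
    intro z
    constructor
    · rintro ⟨⟨z, hzS⟩, hzc, rfl⟩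
      refine ⟨hzS, fun m hm => ?_⟩
      have := (Subgroup.mem_center_iff.mp hzc) ⟨m, hm⟩
      exact congrArg Subtype.val this.symm
    · rintro ⟨hzS, hzc⟩
      refine ⟨⟨z, hzS⟩, Subgroup.mem_center_iff.mpr fun ⟨m, hm⟩ => ?_, rfl⟩
      exact Subtype.ext (hzc m hm).symm
  have hZS : Z ≤ S := fun z hz => ((hZmem z).mp hz).1
  have hZne : Z ≠ ⊥ := by
    obtain ⟨⟨z, hzc⟩, hz1⟩ := exists_ne (1 : Subgroup.center S)
    rw [Subgroup.ne_bot_iff_exists_ne_one]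
    refine ⟨⟨(z : Equiv.Perm X), ⟨z, hzc, rfl⟩⟩, ?_⟩
    intro h
    exact hz1 (Subtype.ext (Subtype.ext (by simpa using congrArg Subtype.val h)))
  have hZconj : ∀ t ∈ T, ∀ z ∈ Z, t * z * t⁻¹ ∈ Z := by
    intro t ht z hz
    obtain ⟨hzS, hzc⟩ := (hZmem z).mp hz
    rw [hZmem]
    refine ⟨hconj t ht z hzS, fun m hm => ?_⟩
    have hm' : t⁻¹ * m * t ∈ S := by
      have := hconj _ (T.inv_mem ht) m hm
      simpa using this
    have := hzc _ hm'
    calc t * z * t⁻¹ * m = t * (z * (t⁻¹ * m * t)) * t⁻¹ := by group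
      _ = t * ((t⁻¹ * m * t) * z) * t⁻¹ := by rw [this]
      _ = m * (t * z * t⁻¹) := by group
  have hZtr := auxFSTPD_transitive hp hX T htrans Z hZconj hZne
  have hx0 : ∃ x0 : X, True := by
    have : 0 < Fintype.card X := by rw [hX]; exact hp.pos
    obtain ⟨x⟩ := Fintype.card_pos_iff.mp this
    exact ⟨x, trivial⟩
  obtain ⟨x0, -⟩ := hx0
  have hZcomm : ∀ a ∈ Z, ∀ b ∈ Z, a * b = b * a := fun a ha b hb =>
    ((hZmem a).mp ha).2 b (hZS hb)
  have hcent : ∀ c : Equiv.Perm X, (∀ z ∈ Z, c * z = z * c) → c ∈ Z := by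
    intro c hc
    obtain ⟨z, hzZ, hzx⟩ := hZtr x0 (c x0)
    have : c = z := by
      ext y
      obtain ⟨w, hwZ, hwx⟩ := hZtr x0 y
      calc c y = (c * w) x0 := by rw [← hwx]; rfl
        _ = (w * c) x0 := by rw [hc w hwZ]
        _ = w (c x0) := rfl
        _ = w (z x0) := by rw [hzx]
        _ = (w * z) x0 := rfl
        _ = (z * w) x0 := by rw [hZcomm w hwZ z hzZ]
        _ = z y := by rw [← hwx]; rfl
    exact this ▸ hzZ
  have hSZ : S = Z := by
    refine le_antisymm (fun m hm => hcent m fun z hz => (((hZmem z).mp hz).2 m hm).symm) hZS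
  have hcardZ : Nat.card Z = p := by
    have hinj : Function.Injective (fun z : Z => (z : Equiv.Perm X) x0) := by
      rintro z1 z2 h
      have hd : ((z2⁻¹ * z1 : Z) : Equiv.Perm X) x0 = x0 := by
        simp only [Subgroup.coe_mul, Subgroup.coe_inv]
        simp only at h
        rw [Equiv.Perm.mul_apply, h]
        simp
      have hone : ((z2⁻¹ * z1 : Z) : Equiv.Perm X) = 1 := by
        set d := ((z2⁻¹ * z1 : Z) : Equiv.Perm X) with hddef
        have hdZ : d ∈ Z := (z2⁻¹ * z1).2
        ext y
        obtain ⟨w, hwZ, hwx⟩ := hZtr x0 y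
        calc d y = (d * w) x0 := by rw [← hwx]; rfl
          _ = (w * d) x0 := by rw [hZcomm d hdZ w hwZ]
          _ = w x0 := by rw [Equiv.Perm.mul_apply, hd]
          _ = y := hwx
        |>.trans (by simp)
      have : (z2⁻¹ * z1 : Z) = 1 := Subtype.ext hone
      exact (inv_mul_eq_one.mp this).symm
    have hsurj : Function.Surjective (fun z : Z => (z : Equiv.Perm X) x0) := by
      intro y
      obtain ⟨z, hz, hzx⟩ := hZtr x0 y
      exact ⟨⟨z, hz⟩, hzx⟩
    have := Nat.card_congr (Equiv.ofBijective _ ⟨hinj, hsurj⟩)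
    rw [this, Nat.card_eq_fintype_card, hX]
  refine ⟨?_, ?_, ?_, ?_⟩
  · rw [hSZ]; exact hZcomm
  · rw [hSZ]; exact hcardZ
  · rw [hSZ]; exact hcent
  · rw [hSZ]; exact hZtr

/-- For a transitive subgroup `T` of the symmetric group on a set of prime size `p`:
(a) every nontrivial nilpotent normal subgroup of `T` has order exactly `p`; and
(b) `T` has a nontrivial nilpotent normal subgroup if and only if `T` is solvable. -/
theorem fitting_subgroup_of_transitive_prime_degree
    {p : ℕ} (hp : p.Prime) {X : Type*} [Fintype X] (hX : Fintype.card X = p)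
    (T : Subgroup (Equiv.Perm X)) (htrans : ∀ x y : X, ∃ σ ∈ T, σ x = y) :
    (∀ N : Subgroup T, N.Normal → Group.IsNilpotent N → N ≠ ⊥ → Nat.card N = p) ∧
    ((∃ N : Subgroup T, N.Normal ∧ Group.IsNilpotent N ∧ N ≠ ⊥) ↔ IsSolvable T) := by
  classical
  have hfacts : ∀ N : Subgroup T, N.Normal → Group.IsNilpotent N → N ≠ ⊥ →
      (∀ a ∈ Subgroup.map T.subtype N, ∀ b ∈ Subgroup.map T.subtype N, a * b = b * a) ∧
      Nat.card (Subgroup.map T.subtype N) = p ∧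
      (∀ c : Equiv.Perm X, (∀ m ∈ Subgroup.map T.subtype N, c * m = m * c) →
        c ∈ Subgroup.map T.subtype N) ∧
      (∀ x y : X, ∃ s ∈ Subgroup.map T.subtype N, s x = y) := by
    intro N hN hnil hne
    haveI := hN
    haveI := hnil
    set M := Subgroup.map T.subtype N with hMdef
    have hMconj : ∀ t ∈ T, ∀ m ∈ M, t * m * t⁻¹ ∈ M := by
      rintro t ht m ⟨n, hnN, rfl⟩
      refine ⟨⟨t, ht⟩ * n * ⟨t, ht⟩⁻¹, hN.conj_mem n hnN ⟨t, ht⟩, ?_⟩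
      simp
    have hMne : M ≠ ⊥ := by
      intro h
      apply hne
      rw [Subgroup.map_eq_bot_iff, Subgroup.ker_subtype, le_bot_iff] at h
      exact h
    have hMnil : Group.IsNilpotent M :=
      nilpotent_of_mulEquiv (Subgroup.equivMapOfInjective N T.subtype T.subtype_injective)
    exact auxFSTPD_key hp hX T htrans M hMconj hMne hMnil
  constructor
  · intro N hN hnil hne
    obtain ⟨-, hcard, -, -⟩ := hfacts N hN hnil hne
    rw [← hcard]
    exact Nat.card_congr (Subgroup.equivMapOfInjective N T.subtype T.subtype_injective).toEquiv
  constructor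
  · rintro ⟨N, hN, hnil, hne⟩
    obtain ⟨hcomm, hcard, hcent, htr⟩ := hfacts N hN hnil hne
    set M := Subgroup.map T.subtype N with hMdef
    have hMconj : ∀ t ∈ T, ∀ m ∈ M, t * m * t⁻¹ ∈ M := by
      rintro t ht m ⟨n, hnN, rfl⟩
      refine ⟨⟨t, ht⟩ * n * ⟨t, ht⟩⁻¹, hN.conj_mem n hnN ⟨t, ht⟩, ?_⟩
      simp
    haveI : Fact p.Prime := ⟨hp⟩
    haveI : IsCyclic M := isCyclic_of_prime_card hcard
    obtain ⟨g, hg⟩ := IsCyclic.exists_generator (α := M)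
    set G0 : Equiv.Perm X := (g : Equiv.Perm X) with hG0def
    have hG0M : G0 ∈ M := g.2
    have hpow : ∀ m ∈ M, ∃ k : ℤ, G0 ^ k = m := by
      intro m hm
      obtain ⟨k, hk⟩ := Subgroup.mem_zpowers_iff.mp (hg ⟨m, hm⟩)
      refine ⟨k, ?_⟩
      have := congrArg (Subtype.val) hk
      simpa using this
    have hconjpow : ∀ t : T, ∃ k : ℤ, (MulAut.conj ((t : Equiv.Perm X))) G0 = G0 ^ k := by
      intro t
      have hmem : (t : Equiv.Perm X) * G0 * (t : Equiv.Perm X)⁻¹ ∈ M :=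
        hMconj _ t.2 G0 hG0M
      obtain ⟨k, hk⟩ := hpow _ hmem
      exact ⟨k, by simpa [MulAut.conj_apply] using hk.symm⟩
    have hkey : ∀ s t : T, ((⁅s, t⁆ : T) : Equiv.Perm X) ∈ M := by
      intro s t
      obtain ⟨j, hj⟩ := hconjpow s
      obtain ⟨k, hk⟩ := hconjpow t
      obtain ⟨j2, hj2⟩ := hconjpow s⁻¹
      obtain ⟨k2, hk2⟩ := hconjpow t⁻¹
      rw [show ((s⁻¹ : T) : Equiv.Perm X) = ((s : Equiv.Perm X))⁻¹ from rfl] at hj2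
      rw [show ((t⁻¹ : T) : Equiv.Perm X) = ((t : Equiv.Perm X))⁻¹ from rfl] at hk2
      set cs : Equiv.Perm X := (s : Equiv.Perm X)
      set ct : Equiv.Perm X := (t : Equiv.Perm X)
      have hjj2 : G0 ^ (j * j2) = G0 := by
        calc G0 ^ (j * j2) = (G0 ^ j) ^ j2 := by rw [zpow_mul]
          _ = ((MulAut.conj cs) G0) ^ j2 := by rw [hj]
          _ = (MulAut.conj cs) (G0 ^ j2) := by rw [map_zpow]
          _ = (MulAut.conj cs) ((MulAut.conj cs⁻¹) G0) := by rw [hj2]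
          _ = G0 := by simp [MulAut.conj_apply]; group
      have hkk2 : G0 ^ (k * k2) = G0 := by
        calc G0 ^ (k * k2) = (G0 ^ k) ^ k2 := by rw [zpow_mul]
          _ = ((MulAut.conj ct) G0) ^ k2 := by rw [hk]
          _ = (MulAut.conj ct) (G0 ^ k2) := by rw [map_zpow]
          _ = (MulAut.conj ct) ((MulAut.conj ct⁻¹) G0) := by rw [hk2]
          _ = G0 := by simp [MulAut.conj_apply]; group
      set c : Equiv.Perm X := ((⁅s, t⁆ : T) : Equiv.Perm X) with hcdef
      have hc : c = cs * ct * cs⁻¹ * ct⁻¹ := by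
        rw [hcdef, commutatorElement_def]
        simp
        rfl
      have hcommG0 : c * G0 = G0 * c := by
        have hconjc : (MulAut.conj c) G0 = G0 := by
          rw [hc]
          have : MulAut.conj (cs * ct * cs⁻¹ * ct⁻¹)
              = MulAut.conj cs * MulAut.conj ct * MulAut.conj cs⁻¹ * MulAut.conj ct⁻¹ := by
            simp [map_mul]
          rw [this]
          show (MulAut.conj cs) ((MulAut.conj ct) ((MulAut.conj cs⁻¹) ((MulAut.conj ct⁻¹) G0))) = G0
          rw [hk2, map_zpow, hj2, ← zpow_mul, map_zpow, hk, ← zpow_mul, map_zpow, hj, ← zpow_mul]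
          calc G0 ^ (j * (k * (j2 * k2))) = G0 ^ ((j * j2) * (k * k2)) := by ring_nf
            _ = (G0 ^ (j * j2)) ^ (k * k2) := by rw [zpow_mul]
            _ = G0 ^ (k * k2) := by rw [hjj2]
            _ = G0 := hkk2
        have := congrArg (fun x => x * c) hconjc
        simpa [MulAut.conj_apply, mul_assoc] using this
      apply hcent
      intro m hm
      obtain ⟨n, hn⟩ := hpow m hm
      rw [← hn]
      have hcc : Commute c G0 := hcommG0
      exact hcc.zpow_right n
    have hD1 : derivedSeries T 1 ≤ N := by
      rw [derivedSeries_succ, derivedSeries_zero, Subgroup.commutator_le]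
      intro s _ t _
      have := hkey s t
      rw [← Subgroup.comap_map_eq_self_of_injective T.subtype_injective N]
      exact this
    have hD2 : derivedSeries T 2 = ⊥ := by
      rw [derivedSeries_succ, eq_bot_iff]
      calc ⁅derivedSeries T 1, derivedSeries T 1⁆ ≤ ⁅N, N⁆ :=
            Subgroup.commutator_mono hD1 hD1
        _ ≤ ⊥ := by
            rw [Subgroup.commutator_le]
            intro a ha b hb
            rw [Subgroup.mem_bot, commutatorElement_eq_one_iff_mul_comm]
            apply Subtype.ext
            exact hcomm _ ⟨a, ha, rfl⟩ _ ⟨b, hb, rfl⟩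
    exact ⟨⟨2, hD2⟩⟩
  · intro hsolv
    obtain ⟨x, y, hxy⟩ := Fintype.exists_pair_of_one_lt_card (by rw [hX]; exact hp.one_lt)
    obtain ⟨σ, hσT, hσ⟩ := htrans x y
    have hσ1 : (⟨σ, hσT⟩ : T) ≠ 1 := by
      intro h
      apply hxy
      have : σ = 1 := congrArg Subtype.val h
      rw [this] at hσ
      exact hσ.symm ▸ rfl
    obtain ⟨n, hn⟩ := hsolv.solvable
    have hex : ∃ n, derivedSeries T n = ⊥ := ⟨n, hn⟩
    set n0 := Nat.find hex with hn0def
    have h0 : derivedSeries T n0 = ⊥ := Nat.find_spec hex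
    have hn0pos : n0 ≠ 0 := by
      intro h
      rw [h, derivedSeries_zero] at h0
      have : (⟨σ, hσT⟩ : T) ∈ (⊥ : Subgroup T) := h0 ▸ Subgroup.mem_top _
      exact hσ1 (Subgroup.mem_bot.mp this)
    set A := derivedSeries T (n0 - 1) with hAdef
    have hAne : A ≠ ⊥ := Nat.find_min hex (by omega)
    have hAA : ⁅A, A⁆ = ⊥ := by
      have : n0 - 1 + 1 = n0 := by omega
      rw [hAdef, ← derivedSeries_succ, this, h0]
    have hcommA : ∀ a b : A, a * b = b * a := by
      intro a b
      have : ⁅(a : T), (b : T)⁆ ∈ ⁅A, A⁆ := Subgroup.commutator_mem_commutator a.2 b.2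
      rw [hAA, Subgroup.mem_bot, commutatorElement_eq_one_iff_mul_comm] at this
      exact Subtype.ext this
    letI : CommGroup A := { (inferInstance : Group A) with mul_comm := hcommA }
    exact ⟨A, derivedSeries_normal T (n0 - 1), CommGroup.isNilpotent, hAne⟩
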